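/- Let 𝒦 ⊆ ℝⁿ be a closed convex cone, c an element of the topological interior of the dual cone 𝒦* := {y : ⟨x, y⟩ ≥ 0 for all x ∈ 𝒦}, A : ℝⁿ → ℝᵐ a linear map, and b ∈ ℝᵐ such that the feasible set {x ∈ 𝒦 : Ax = b} is nonempty. Then strong duality holds for the conic program: inf{⟨c, x⟩ : x ∈ 𝒦, Ax = b} = sup_{y ∈ ℝᵐ} inf_{x ∈ 𝒦} (⟨c, x⟩ + ⟨y, b − Ax⟩). -/

import Mathlib

open scoped RealInnerProductSpace

/-- **Strong duality for conic programs with `c` interior to the dual cone.**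
Let `𝒦 ⊆ ℝⁿ` be a closed convex cone, `c` in the interior of the dual cone
`𝒦* = {y : ⟨x, y⟩ ≥ 0 ∀ x ∈ 𝒦}`, `A : ℝⁿ → ℝᵐ` linear and `b ∈ ℝᵐ` with
`{x ∈ 𝒦 : Ax = b}` nonempty.  Then strong duality holds:
`inf {⟨c, x⟩ : x ∈ 𝒦, Ax = b} = sup_y inf_{x ∈ 𝒦} (⟨c, x⟩ + ⟨y, b - Ax⟩)`. -/

lemma conic_sep_key {n m : ℕ}
    (𝒦 : Set (EuclideanSpace ℝ (Fin n)))
    (hclosed : IsClosed 𝒦) (hcvx : Convex ℝ 𝒦)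
    (c : EuclideanSpace ℝ (Fin n))
    (δ : ℝ) (hδ : 0 < δ)
    (hcoer : ∀ x ∈ 𝒦, δ * ‖x‖ ≤ ⟪c, x⟫)
    (A : EuclideanSpace ℝ (Fin n) →ₗ[ℝ] EuclideanSpace ℝ (Fin m))
    (b : EuclideanSpace ℝ (Fin m))
    (x₀ : EuclideanSpace ℝ (Fin n)) (hx₀K : x₀ ∈ 𝒦) (hx₀A : A x₀ = b)
    (p ε : ℝ) (hε : 0 < ε)
    (hp_le : ∀ x ∈ 𝒦, A x = b → p ≤ ⟪c, x⟫) :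
    ∃ y : EuclideanSpace ℝ (Fin m), ∀ x ∈ 𝒦, p - ε ≤ ⟪c, x⟫ + ⟪y, b - A x⟫ := by
  have hAcont : Continuous A := A.continuous_of_finiteDimensional
  have hcnn : ∀ x ∈ 𝒦, 0 ≤ ⟪c, x⟫ := fun x hx =>
    le_trans (by positivity) (hcoer x hx)
  -- the auxiliary convex set
  set M : Set (EuclideanSpace ℝ (Fin m) × ℝ) :=
    {z | ∃ x ∈ 𝒦, ∃ s : ℝ, 0 ≤ s ∧ z = (A x - b, ⟪c, x⟫ + s)} with hM
  have hMconv : Convex ℝ M := by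
    rintro z₁ ⟨x₁, hx₁, s₁, hs₁, rfl⟩ z₂ ⟨x₂, hx₂, s₂, hs₂, rfl⟩ a b' ha hb' hab
    refine ⟨a • x₁ + b' • x₂, hcvx hx₁ hx₂ ha hb' hab, a * s₁ + b' * s₂,
      by positivity, ?_⟩
    have h1 : a • (A x₁ - b) + b' • (A x₂ - b) = A (a • x₁ + b' • x₂) - b := by
      have hm : a • (A x₁ - b) + b' • (A x₂ - b)
          = a • A x₁ + b' • A x₂ - (a + b') • b := by module
      rw [hm, hab, one_smul, map_add, map_smul, map_smul]
    have h2 : ⟪c, a • x₁ + b' • x₂⟫ = a * ⟪c, x₁⟫ + b' * ⟪c, x₂⟫ := by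
      rw [inner_add_right, real_inner_smul_right, real_inner_smul_right]
    show (a • ((A x₁ - b, ⟪c, x₁⟫ + s₁) : EuclideanSpace ℝ (Fin m) × ℝ)
        + b' • (A x₂ - b, ⟪c, x₂⟫ + s₂)) = _
    rw [Prod.smul_mk, Prod.smul_mk, Prod.mk_add_mk, Prod.mk.injEq]
    constructor
    · exact h1
    · simp only [smul_eq_mul]; rw [h2]; ring
  have hMclosed : IsClosed M := by
    apply IsSeqClosed.isClosed
    intro z L hz hL
    choose x hxK s hs hzx using hz
    have hz2 : ∀ k, (z k).2 = ⟪c, x k⟫ + s k := fun k => by rw [hzx k]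
    have hz1 : ∀ k, (z k).1 = A (x k) - b := fun k => by rw [hzx k]
    have hL2 : Filter.Tendsto (fun k => (z k).2) Filter.atTop (nhds L.2) :=
      (continuous_snd.tendsto L).comp hL
    obtain ⟨B, hB⟩ := hL2.bddAbove_range
    have hBs : ∀ k, ⟪c, x k⟫ ≤ B := by
      intro k
      have := hB (Set.mem_range_self k)
      rw [hz2 k] at this
      linarith [hs k]
    have hxball : ∀ k, x k ∈ Metric.closedBall (0 : EuclideanSpace ℝ (Fin n)) (B / δ) := by
      intro k
      rw [Metric.mem_closedBall, dist_zero_right]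
      have h1 := hcoer (x k) (hxK k)
      rw [le_div_iff₀ hδ]
      calc ‖x k‖ * δ = δ * ‖x k‖ := mul_comm _ _
        _ ≤ ⟪c, x k⟫ := h1
        _ ≤ B := hBs k
    obtain ⟨a, _, φ, hφ, hxa⟩ :=
      (isCompact_closedBall (0 : EuclideanSpace ℝ (Fin n)) (B / δ)).tendsto_subseq hxball
    have haK : a ∈ 𝒦 :=
      hclosed.mem_of_tendsto hxa (Filter.Eventually.of_forall fun k => hxK _)
    have hLφ : Filter.Tendsto (z ∘ φ) Filter.atTop (nhds L) := hL.comp hφ.tendsto_atTop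
    have hL1 : L.1 = A a - b := by
      have t1 : Filter.Tendsto (fun k => (z (φ k)).1) Filter.atTop (nhds L.1) :=
        (continuous_fst.tendsto L).comp hLφ
      have t2 : Filter.Tendsto (fun k => A (x (φ k)) - b) Filter.atTop (nhds (A a - b)) :=
        ((hAcont.tendsto a).comp hxa).sub_const b
      have : (fun k => (z (φ k)).1) = fun k => A (x (φ k)) - b := by
        funext k; exact hz1 (φ k)
      rw [this] at t1
      exact tendsto_nhds_unique t1 t2
    have hcx : Filter.Tendsto (fun k => ⟪c, x (φ k)⟫) Filter.atTop (nhds ⟪c, a⟫) :=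
      ((Continuous.inner continuous_const continuous_id).tendsto a).comp hxa
    have hsφ : Filter.Tendsto (fun k => s (φ k)) Filter.atTop (nhds (L.2 - ⟪c, a⟫)) := by
      have t1 : Filter.Tendsto (fun k => (z (φ k)).2) Filter.atTop (nhds L.2) :=
        (continuous_snd.tendsto L).comp hLφ
      have : (fun k => s (φ k)) = fun k => (z (φ k)).2 - ⟪c, x (φ k)⟫ := by
        funext k; rw [hz2 (φ k)]; ring
      rw [this]
      exact t1.sub hcx
    have hsnn : 0 ≤ L.2 - ⟪c, a⟫ :=
      le_of_tendsto_of_tendsto' tendsto_const_nhds hsφ (fun k => hs (φ k))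
    exact ⟨a, haK, L.2 - ⟪c, a⟫, hsnn, by rw [← hL1]; ext <;> simp⟩
  -- the point to separate
  have hz₀ : ((0 : EuclideanSpace ℝ (Fin m)), p - ε) ∉ M := by
    rintro ⟨x, hx, s, hs, heq⟩
    rw [Prod.mk.injEq] at heq
    obtain ⟨h1, h2⟩ := heq
    have hAx : A x = b := by rw [eq_comm, sub_eq_zero] at h1; exact h1
    have := hp_le x hx hAx
    linarith
  obtain ⟨f, u, hfu, hMf⟩ := geometric_hahn_banach_point_closed hMconv hMclosed hz₀
  set β : ℝ := f ((0 : EuclideanSpace ℝ (Fin m)), (1 : ℝ)) with hβ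
  have hsplit : ∀ (w : EuclideanSpace ℝ (Fin m)) (t : ℝ),
      f (w, t) = f (w, 0) + t * β := by
    intro w t
    have : ((w, t) : EuclideanSpace ℝ (Fin m) × ℝ)
        = (w, 0) + t • ((0 : EuclideanSpace ℝ (Fin m)), (1 : ℝ)) := by
      rw [Prod.smul_mk, Prod.mk_add_mk]; simp
    rw [this, map_add, map_smul, smul_eq_mul]
  have hfz₀ : f ((0 : EuclideanSpace ℝ (Fin m)), p - ε) = (p - ε) * β := by
    rw [hsplit]
    have : f ((0 : EuclideanSpace ℝ (Fin m)), (0 : ℝ)) = 0 := by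
      have : ((0 : EuclideanSpace ℝ (Fin m)), (0 : ℝ))
          = (0 : EuclideanSpace ℝ (Fin m) × ℝ) := rfl
      rw [this, map_zero]
    rw [this, zero_add]
  have hmem₀ : ∀ s : ℝ, 0 ≤ s → ((0 : EuclideanSpace ℝ (Fin m)), ⟪c, x₀⟫ + s) ∈ M := by
    intro s hs
    exact ⟨x₀, hx₀K, s, hs, by rw [hx₀A, sub_self]⟩
  have hf0 : ∀ w : EuclideanSpace ℝ (Fin m), f (w, 0) = f ((w, 0) : _ × ℝ) := fun _ => rfl
  have hβpos : 0 < β := by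
    rcases lt_trichotomy β 0 with hneg | hzero | hpos
    · -- β < 0 : take s large
      set s : ℝ := max 0 (u / β - ⟪c, x₀⟫) with hsdef
      have hs0 : 0 ≤ s := le_max_left _ _
      have hs1 : u / β - ⟪c, x₀⟫ ≤ s := le_max_right _ _
      have h1 := hMf _ (hmem₀ s hs0)
      rw [hsplit] at h1
      have hf00 : f ((0 : EuclideanSpace ℝ (Fin m)), (0 : ℝ)) = 0 := by
        have : ((0 : EuclideanSpace ℝ (Fin m)), (0 : ℝ))
            = (0 : EuclideanSpace ℝ (Fin m) × ℝ) := rfl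
        rw [this, map_zero]
      rw [hf00, zero_add] at h1
      -- h1 : u < (⟪c,x₀⟫ + s) * β
      have h2 : u / β ≤ ⟪c, x₀⟫ + s := by linarith
      have h3 : (⟪c, x₀⟫ + s) * β ≤ (u / β) * β :=
        mul_le_mul_of_nonpos_right h2 hneg.le
      rw [div_mul_cancel₀ u hneg.ne] at h3
      linarith
    · exfalso
      have h1 := hMf _ (hmem₀ 0 le_rfl)
      rw [hsplit, hzero] at h1
      have hf00 : f ((0 : EuclideanSpace ℝ (Fin m)), (0 : ℝ)) = 0 := by
        have : ((0 : EuclideanSpace ℝ (Fin m)), (0 : ℝ))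
            = (0 : EuclideanSpace ℝ (Fin m) × ℝ) := rfl
        rw [this, map_zero]
      rw [hf00] at h1
      rw [hfz₀, hzero, mul_zero] at hfu
      linarith
    · exact hpos
  -- define y
  set g : EuclideanSpace ℝ (Fin m) →L[ℝ] ℝ :=
    f.comp (ContinuousLinearMap.inl ℝ (EuclideanSpace ℝ (Fin m)) ℝ) with hg
  have hgw : ∀ w, g w = f (w, 0) := fun w => rfl
  set y₀ : EuclideanSpace ℝ (Fin m) :=
    (InnerProductSpace.toDual ℝ (EuclideanSpace ℝ (Fin m))).symm g with hy₀
  have hy₀w : ∀ w, ⟪y₀, w⟫ = g w := fun w => InnerProductSpace.toDual_symm_apply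
  refine ⟨(-(1 / β)) • y₀, fun x hx => ?_⟩
  have h1 := hMf _ ⟨x, hx, 0, le_rfl, by rw [add_zero]⟩
  rw [hsplit] at h1
  rw [hfz₀] at hfu
  -- h1 : u < f (A x - b, 0) + ⟪c,x⟫ * β
  have hkey : (p - ε) * β < f (A x - b, 0) + ⟪c, x⟫ * β := lt_trans hfu h1
  have hinner : ⟪(-(1 / β)) • y₀, b - A x⟫ = (1 / β) * f (A x - b, 0) := by
    rw [real_inner_smul_left, hy₀w, hgw]
    have : (b - A x) = -(A x - b) := by abel
    rw [this]
    have : f ((-(A x - b), 0) : _ × ℝ) = -f ((A x - b, 0) : _ × ℝ) := by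
      rw [← map_neg]; congr 1; rw [Prod.neg_mk, neg_zero]
    rw [this]; ring
  rw [hinner]
  have hne : β ≠ 0 := hβpos.ne'
  set G : ℝ := f (A x - b, 0) with hG
  set cx : ℝ := ⟪c, x⟫ with hcx
  have h2 : (p - ε) * β < (cx + 1 / β * G) * β := by
    have hexp : (cx + 1 / β * G) * β = cx * β + G := by field_simp
    rw [hexp]; linarith
  exact ((mul_lt_mul_iff_of_pos_right hβpos).mp h2).le


theorem conic_strong_duality {n m : ℕ}
    (𝒦 : Set (EuclideanSpace ℝ (Fin n)))
    (hclosed : IsClosed 𝒦) (hcvx : Convex ℝ 𝒦)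
    (hcone : ∀ x ∈ 𝒦, ∀ t : ℝ, 0 ≤ t → t • x ∈ 𝒦)
    (c : EuclideanSpace ℝ (Fin n))
    (hc : c ∈ interior {y : EuclideanSpace ℝ (Fin n) | ∀ x ∈ 𝒦, 0 ≤ ⟪x, y⟫})
    (A : EuclideanSpace ℝ (Fin n) →ₗ[ℝ] EuclideanSpace ℝ (Fin m))
    (b : EuclideanSpace ℝ (Fin m))
    (hfeas : ∃ x ∈ 𝒦, A x = b) :
    sInf {t : EReal | ∃ x ∈ 𝒦, A x = b ∧ t = ((⟪c, x⟫ : ℝ) : EReal)} =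
      ⨆ y : EuclideanSpace ℝ (Fin m),
        ⨅ x ∈ 𝒦, ((⟪c, x⟫ + ⟪y, b - A x⟫ : ℝ) : EReal) := by
  obtain ⟨x₀, hx₀K, hx₀A⟩ := hfeas
  obtain ⟨δ, hδpos, hball⟩ := Metric.isOpen_iff.mp isOpen_interior c hc
  -- coercivity of the objective on the cone
  have hcoer : ∀ x ∈ 𝒦, (δ / 2) * ‖x‖ ≤ ⟪c, x⟫ := by
    intro x hx
    rcases eq_or_ne x 0 with rfl | hx0
    · simp
    · have hn : (0 : ℝ) < ‖x‖ := norm_pos_iff.mpr hx0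
      set t : ℝ := δ / (2 * ‖x‖) with ht
      have htpos : 0 < t := by positivity
      have hmem : c - t • x ∈ Metric.ball c δ := by
        rw [Metric.mem_ball, dist_eq_norm]
        have he : c - t • x - c = -(t • x) := by abel
        rw [he, norm_neg, norm_smul, Real.norm_eq_abs, abs_of_pos htpos, ht]
        rw [div_mul_eq_mul_div, mul_comm, ← div_mul_eq_mul_div]
        have : ‖x‖ / (2 * ‖x‖) = 1 / 2 := by field_simp
        rw [this]
        linarith
      have h0 : 0 ≤ ⟪x, c - t • x⟫ := interior_subset (hball hmem) x hx
      rw [inner_sub_right, real_inner_smul_right, real_inner_self_eq_norm_sq] at h0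
      have hts : t * ‖x‖ ^ 2 = (δ / 2) * ‖x‖ := by
        rw [ht]; field_simp
      rw [hts] at h0
      rw [real_inner_comm]
      linarith
  set P : Set EReal := {t : EReal | ∃ x ∈ 𝒦, A x = b ∧ t = ((⟪c, x⟫ : ℝ) : EReal)}
    with hPdef
  set S : EReal := ⨆ y : EuclideanSpace ℝ (Fin m),
      ⨅ x ∈ 𝒦, ((⟪c, x⟫ + ⟪y, b - A x⟫ : ℝ) : EReal) with hSdef
  have hmem₀ : ((⟪c, x₀⟫ : ℝ) : EReal) ∈ P := ⟨x₀, hx₀K, hx₀A, rfl⟩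
  have hnn : ∀ t ∈ P, (0 : EReal) ≤ t := by
    rintro t ⟨x, hx, hAx, rfl⟩
    have : (0 : ℝ) ≤ ⟪c, x⟫ := le_trans (by positivity) (hcoer x hx)
    exact_mod_cast this
  have h0le : (0 : EReal) ≤ sInf P := le_sInf hnn
  have hne_top : sInf P ≠ ⊤ := (lt_of_le_of_lt (sInf_le hmem₀) (EReal.coe_lt_top _)).ne
  have hne_bot : sInf P ≠ ⊥ := (lt_of_lt_of_le EReal.bot_lt_zero h0le).ne'
  set p : ℝ := (sInf P).toReal with hpdef
  have hpeq : ((p : ℝ) : EReal) = sInf P := EReal.coe_toReal hne_top hne_bot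
  have hp_le : ∀ x ∈ 𝒦, A x = b → p ≤ ⟪c, x⟫ := by
    intro x hx hAx
    have h1 : sInf P ≤ ((⟪c, x⟫ : ℝ) : EReal) := sInf_le ⟨x, hx, hAx, rfl⟩
    rw [← hpeq] at h1
    exact_mod_cast h1
  apply le_antisymm
  · -- strong direction
    rw [← hpeq]
    have hstep : ∀ ε : ℝ, 0 < ε → ((p - ε : ℝ) : EReal) ≤ S := by
      intro ε hε
      obtain ⟨y, hy⟩ := conic_sep_key 𝒦 hclosed hcvx c (δ / 2) (by positivity) hcoer
        A b x₀ hx₀K hx₀A p ε hε hp_le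
      calc ((p - ε : ℝ) : EReal)
          ≤ ⨅ x ∈ 𝒦, ((⟪c, x⟫ + ⟪y, b - A x⟫ : ℝ) : EReal) :=
            le_iInf₂ fun x hx => EReal.coe_le_coe_iff.mpr (hy x hx)
        _ ≤ S := le_iSup (fun y => ⨅ x ∈ 𝒦, ((⟪c, x⟫ + ⟪y, b - A x⟫ : ℝ) : EReal)) y
    by_contra hlt
    push_neg at hlt
    have hSnebot : S ≠ ⊥ :=
      (lt_of_lt_of_le (EReal.bot_lt_coe _) (hstep 1 one_pos)).ne'
    have hSnetop : S ≠ ⊤ := ne_top_of_lt hlt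
    have hseq : ((S.toReal : ℝ) : EReal) = S := EReal.coe_toReal hSnetop hSnebot
    have hps : p ≤ S.toReal := by
      apply le_of_forall_pos_le_add
      intro ε hε
      have h1 := hstep ε hε
      rw [← hseq] at h1
      have h2 := EReal.coe_le_coe_iff.mp h1
      linarith
    have : ((p : ℝ) : EReal) ≤ S := by
      rw [← hseq]; exact_mod_cast hps
    exact absurd hlt (not_lt.mpr this)
  · -- weak duality
    apply iSup_le
    intro y
    apply le_sInf
    rintro t ⟨x, hx, hAx, rfl⟩
    have h1 : (⨅ x ∈ 𝒦, ((⟪c, x⟫ + ⟪y, b - A x⟫ : ℝ) : EReal))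
        ≤ ((⟪c, x⟫ + ⟪y, b - A x⟫ : ℝ) : EReal) := iInf₂_le x hx
    have h2 : ⟪y, b - A x⟫ = 0 := by rw [hAx, sub_self, inner_zero_right]
    rw [h2, add_zero] at h1
    exact h1
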